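/- For the single-input discrete-time system obtained from augmenting with an integrator, if the pair (A, B) is controllable and the matrix [[A − I, B], [C, 0]] has full row rank, then the augmented pair (A_a, B_a) with A_a = [[A, 0], [−C, I]] and B_a = [B; 0] is controllable. -/
import Mathlib

open Matrix

lemma rank_eq_card_iff_vecMul_injective {I J : Type*} [Fintype I] [Fintype J]
    (M : Matrix I J ℝ) :
    M.rank = Fintype.card I ↔ ∀ v : I → ℝ, v ᵥ* M = 0 → v = 0 := by
  rw [← Matrix.rank_transpose]
  have hrn := LinearMap.finrank_range_add_finrank_ker (Mᵀ.mulVecLin)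
  rw [Module.finrank_fintype_fun_eq_card] at hrn
  have hker : (∀ v : I → ℝ, v ᵥ* M = 0 → v = 0) ↔ LinearMap.ker Mᵀ.mulVecLin = ⊥ := by
    rw [LinearMap.ker_eq_bot']
    constructor
    · intro h v hv
      exact h v (by rwa [← Matrix.mulVec_transpose, ← Matrix.mulVecLin_apply])
    · intro h v hv
      exact h v (by rwa [Matrix.mulVecLin_apply, Matrix.mulVec_transpose])
  rw [hker]
  unfold Matrix.rank
  constructor
  · intro h
    rw [h] at hrn
    simpa using (Submodule.finrank_eq_zero (S := LinearMap.ker Mᵀ.mulVecLin)).mp (by omega)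
  · intro h
    rw [h] at hrn
    simpa using hrn

/-- Controllability of the integrator-augmented pair `(A_a, B_a)` from
controllability of `(A, B)` and the full-row-rank condition on
`[[A − I, B], [C, 0]]`. -/
theorem augmented_pair_controllable
    (n m p : ℕ)
    (A : Matrix (Fin n) (Fin n) ℝ) (B : Matrix (Fin n) (Fin m) ℝ)
    (C : Matrix (Fin p) (Fin n) ℝ)
    (ctrb : Matrix (Fin n) (Fin n × Fin m) ℝ)
    (hctrb : ∀ i jl, ctrb i jl = (A ^ (jl.1 : ℕ) * B) i jl.2)
    (hAB : ctrb.rank = n)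
    (hrank : (Matrix.fromBlocks (A - 1) B C 0).rank = n + p)
    (Aa : Matrix (Fin n ⊕ Fin p) (Fin n ⊕ Fin p) ℝ)
    (hAa : Aa = Matrix.fromBlocks A 0 (-C) 1)
    (Ba : Matrix (Fin n ⊕ Fin p) (Fin m) ℝ)
    (hBa : Ba = Matrix.of (Sum.elim (fun i j => B i j) (fun _ _ => 0)))
    (ctrbA : Matrix (Fin n ⊕ Fin p) (Fin (n + p) × Fin m) ℝ)
    (hctrbA : ∀ i jl, ctrbA i jl = (Aa ^ (jl.1 : ℕ) * Ba) i jl.2) :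
    ctrbA.rank = n + p := by
  classical
  have hABinj : ∀ x : Fin n → ℝ, x ᵥ* ctrb = 0 → x = 0 := by
    have := (rank_eq_card_iff_vecMul_injective ctrb).mp (by simpa using hAB)
    exact this
  have hrankinj := (rank_eq_card_iff_vecMul_injective
      (Matrix.fromBlocks (A - 1) B C 0)).mp (by simpa using hrank)
  refine ((rank_eq_card_iff_vecMul_injective ctrbA).mpr ?_).trans (by simp)
  intro v hv
  have hBav : ∀ u : Fin n ⊕ Fin p → ℝ, u ᵥ* Ba = (u ∘ Sum.inl) ᵥ* B := by
    intro u
    funext l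
    simp [hBa, Matrix.vecMul, dotProduct, Fintype.sum_sum_type]
  have hv' : ∀ j : Fin (n + p), ((v ᵥ* Aa ^ (j : ℕ)) ∘ Sum.inl) ᵥ* B = 0 := by
    intro j
    rw [← hBav, Matrix.vecMul_vecMul]
    funext l
    have h1 := congrFun hv (j, l)
    simp only [Matrix.vecMul, dotProduct, hctrbA, Pi.zero_apply] at h1 ⊢
    exact h1
  have hstepr : ∀ (u : Fin n ⊕ Fin p → ℝ) (q : Fin p),
      (u ᵥ* Aa) (Sum.inr q) = u (Sum.inr q) := by
    intro u q
    rw [hAa, Matrix.vecMul_fromBlocks]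
    simp [Matrix.vecMul_zero, Matrix.vecMul_one]
  have hinr : ∀ (j : ℕ) (q : Fin p), (v ᵥ* Aa ^ j) (Sum.inr q) = v (Sum.inr q) := by
    intro j
    induction j with
    | zero => simp [Matrix.vecMul_one]
    | succ j ih =>
      intro q
      rw [pow_succ, ← Matrix.vecMul_vecMul, hstepr]
      exact ih q
  have hinl : ∀ (u : Fin n ⊕ Fin p → ℝ) (i : Fin n),
      (u ᵥ* Aa) (Sum.inl i) = ((u ∘ Sum.inl) ᵥ* A) i - ((u ∘ Sum.inr) ᵥ* C) i := by
    intro u i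
    rw [hAa, Matrix.vecMul_fromBlocks]
    simp only [Sum.elim_inl, Pi.add_apply]
    simp [Matrix.vecMul, dotProduct, mul_neg, Finset.sum_neg_distrib, sub_eq_add_neg]
  rcases Nat.eq_zero_or_pos p with hp | hp
  · -- p = 0
    subst hp
    have hx : ∀ (j : ℕ), ((v ᵥ* Aa ^ j) ∘ Sum.inl) = (v ∘ Sum.inl) ᵥ* A ^ j := by
      intro j
      induction j with
      | zero => simp [Matrix.vecMul_one]
      | succ j ih =>
        funext i
        simp only [Function.comp_apply]
        rw [pow_succ, ← Matrix.vecMul_vecMul, hinl]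
        have hz : (((v ᵥ* Aa ^ j) ∘ Sum.inr) ᵥ* C) i = 0 := by
          simp [Matrix.vecMul, dotProduct]
        rw [hz, sub_zero, ih, pow_succ, ← Matrix.vecMul_vecMul]
    have hv0 : (v ∘ Sum.inl) ᵥ* ctrb = 0 := by
      funext jl
      obtain ⟨j, l⟩ := jl
      have h2 : (((v ∘ Sum.inl) ᵥ* A ^ (j : ℕ)) ᵥ* B) l = 0 := by
        rw [← hx]
        exact congrFun (hv' ⟨(j : ℕ), by omega⟩) l
      rw [Matrix.vecMul_vecMul] at h2
      simp only [Matrix.vecMul, dotProduct, hctrb, Pi.zero_apply] at h2 ⊢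
      exact h2
    have hz0 := hABinj _ hv0
    funext i
    cases i with
    | inl i => simpa using congrFun hz0 i
    | inr q => exact q.elim0
  · -- p ≥ 1
    obtain ⟨w, hwdef⟩ : ∃ w : ℕ → Fin n → ℝ, ∀ j, w j =
        ((v ᵥ* Aa ^ (j + 1)) ∘ Sum.inl) - ((v ᵥ* Aa ^ j) ∘ Sum.inl) := ⟨_, fun _ => rfl⟩
    have hwstep : ∀ j, w (j + 1) = w j ᵥ* A := by
      intro j
      rw [hwdef (j + 1), hwdef j, Matrix.sub_vecMul]
      funext i
      simp only [Pi.sub_apply, Function.comp_apply]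
      have h1 : (v ᵥ* Aa ^ (j + 1 + 1)) (Sum.inl i)
          = (((v ᵥ* Aa ^ (j + 1)) ∘ Sum.inl) ᵥ* A) i
            - (((v ᵥ* Aa ^ (j + 1)) ∘ Sum.inr) ᵥ* C) i := by
        rw [pow_succ, ← Matrix.vecMul_vecMul]; exact hinl _ i
      have h2 : (v ᵥ* Aa ^ (j + 1)) (Sum.inl i)
          = (((v ᵥ* Aa ^ j) ∘ Sum.inl) ᵥ* A) i - (((v ᵥ* Aa ^ j) ∘ Sum.inr) ᵥ* C) i := by
        rw [pow_succ, ← Matrix.vecMul_vecMul]; exact hinl _ i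
      have hcf : ((v ᵥ* Aa ^ (j + 1)) ∘ Sum.inr) = ((v ᵥ* Aa ^ j) ∘ Sum.inr) := by
        funext q
        simp only [Function.comp_apply]
        rw [hinr, hinr]
      have hc : (((v ᵥ* Aa ^ (j + 1)) ∘ Sum.inr) ᵥ* C) i
          = (((v ᵥ* Aa ^ j) ∘ Sum.inr) ᵥ* C) i := by rw [hcf]
      linarith [h1, h2, hc]
    have hwpow : ∀ j, w j = w 0 ᵥ* A ^ j := by
      intro j
      induction j with
      | zero => simp [Matrix.vecMul_one]
      | succ j ih => rw [hwstep, ih, Matrix.vecMul_vecMul, ← pow_succ]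
    have hwB : ∀ j : ℕ, j < n → w j ᵥ* B = 0 := by
      intro j hj
      have ha : ((v ᵥ* Aa ^ j) ∘ Sum.inl) ᵥ* B = 0 := hv' ⟨j, by omega⟩
      have hb : ((v ᵥ* Aa ^ (j + 1)) ∘ Sum.inl) ᵥ* B = 0 := hv' ⟨j + 1, by omega⟩
      rw [hwdef j, Matrix.sub_vecMul, ha, hb, sub_zero]
    have hw0 : w 0 = 0 := by
      apply hABinj
      funext jl
      obtain ⟨j, l⟩ := jl
      have h2 : ((w 0 ᵥ* A ^ (j : ℕ)) ᵥ* B) l = 0 := by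
        rw [← hwpow]
        exact congrFun (hwB j j.isLt) l
      rw [Matrix.vecMul_vecMul] at h2
      simp only [Matrix.vecMul, dotProduct, hctrb, Pi.zero_apply] at h2 ⊢
      exact h2
    have hfix : ∀ i, ((v ∘ Sum.inl) ᵥ* A) i - ((v ∘ Sum.inr) ᵥ* C) i = v (Sum.inl i) := by
      intro i
      have h6' : ((v ᵥ* Aa ^ (0 + 1)) ∘ Sum.inl) - ((v ᵥ* Aa ^ 0) ∘ Sum.inl) = 0 :=
        (hwdef 0).symm.trans hw0
      have h6 := congrFun h6' i
      simp only [Pi.sub_apply, Pi.zero_apply, Function.comp_apply, zero_add, pow_one,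
        pow_zero, Matrix.vecMul_one] at h6
      rw [hinl] at h6
      linarith
    have hvB : (v ∘ Sum.inl) ᵥ* B = 0 := by
      simpa [Matrix.vecMul_one] using hv' ⟨0, by omega⟩
    have hvv0 : (Sum.elim (v ∘ Sum.inl) (fun q => -(v (Sum.inr q))))
        ᵥ* Matrix.fromBlocks (A - 1) B C 0 = 0 := by
      rw [Matrix.vecMul_fromBlocks]
      funext k
      cases k with
      | inl i =>
        simp only [Sum.elim_inl, Pi.add_apply, Pi.zero_apply]
        have e1 : ((Sum.elim (v ∘ Sum.inl) (fun q => -(v (Sum.inr q)))) ∘ Sum.inl)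
            = v ∘ Sum.inl := rfl
        have e2 : ((Sum.elim (v ∘ Sum.inl) (fun q => -(v (Sum.inr q)))) ∘ Sum.inr) ᵥ* C
            = -((v ∘ Sum.inr) ᵥ* C) := by
          have e3 : ((Sum.elim (v ∘ Sum.inl) (fun q => -(v (Sum.inr q)))) ∘ Sum.inr)
              = -(v ∘ Sum.inr) := rfl
          rw [e3, Matrix.neg_vecMul]
        rw [e1, e2, Matrix.vecMul_sub, Matrix.vecMul_one]
        simp only [Pi.sub_apply, Pi.neg_apply, Function.comp_apply]
        linarith [hfix i]
      | inr l =>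
        simp only [Sum.elim_inr, Pi.add_apply, Pi.zero_apply]
        have e1 : ((Sum.elim (v ∘ Sum.inl) (fun q => -(v (Sum.inr q)))) ∘ Sum.inl)
            = v ∘ Sum.inl := rfl
        rw [e1, Matrix.vecMul_zero]
        simp only [Pi.zero_apply, add_zero]
        exact congrFun hvB l
    have hfin := hrankinj _ hvv0
    funext i
    cases i with
    | inl i => simpa using congrFun hfin (Sum.inl i)
    | inr q =>
      have h7 := congrFun hfin (Sum.inr q)
      simp only [Sum.elim_inr, Pi.zero_apply] at h7 ⊢
      linarith
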